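/- Every ideal of T_n is of the form I[α] = {x ∈ T_n : x_{ij} = 0 whenever i > α(j)} for some order-preserving function α : {0,1,…,n} → {0,1,…,n} with α(k) ≤ k for all k. -/

import Mathlib

/-- The set of upper triangular `n × n` complex matrices. -/
def UT (n : ℕ) : Set (Matrix (Fin n) (Fin n) ℂ) :=
  {M | ∀ i j : Fin n, j < i → M i j = 0}

/-- `I` is a two-sided ideal of the (sub)algebra with underlying set `A`. -/
def IsIdealIn {n : ℕ} (A I : Set (Matrix (Fin n) (Fin n) ℂ)) : Prop :=
  I ⊆ A ∧ (0 : Matrix (Fin n) (Fin n) ℂ) ∈ I ∧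
    (∀ x ∈ I, ∀ y ∈ I, x + y ∈ I) ∧
    (∀ c : ℂ, ∀ x ∈ I, c • x ∈ I) ∧
    (∀ a ∈ A, ∀ x ∈ I, a * x ∈ I ∧ x * a ∈ I)

lemma aux_std_mem_UT {n : ℕ} {i j : Fin n} (h : i ≤ j) (c : ℂ) :
    Matrix.single i j c ∈ UT n := by
  intro a b hba
  apply Matrix.single_apply_of_ne
  rintro ⟨rfl, rfl⟩
  exact absurd h (not_le.mpr hba)

lemma aux_shift {n : ℕ} {I : Set (Matrix (Fin n) (Fin n) ℂ)}
    (hI : IsIdealIn (UT n) I) {x : Matrix (Fin n) (Fin n) ℂ} (hx : x ∈ I)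
    {i₀ j₀ i j : Fin n} (hii : i ≤ i₀) (hjj : j₀ ≤ j) :
    x i₀ j₀ • Matrix.single i j (1 : ℂ) ∈ I := by
  have h1 : Matrix.single i i₀ (1:ℂ) * x * Matrix.single j₀ j (1:ℂ) ∈ I := by
    have h2 := (hI.2.2.2.2 _ (aux_std_mem_UT hii 1) x hx).1
    exact (hI.2.2.2.2 _ (aux_std_mem_UT hjj 1) _ h2).2
  convert h1 using 1
  ext p q
  rcases eq_or_ne q j with rfl | hq
  · rcases eq_or_ne p i with rfl | hp
    · simp [Matrix.smul_apply]
    · simp [Matrix.smul_apply, Matrix.mul_single_apply_same,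
        Matrix.single_mul_apply_of_ne _ _ _ _ _ hp, hp.symm]
  · simp [Matrix.smul_apply, Matrix.mul_single_apply_of_ne _ _ _ _ _ hq, hq.symm]

/-- Every ideal of `T_n` is of the form
`I[α] = {x ∈ T_n : x i j = 0 whenever i > α(j)}` for some order-preserving
`α : {0,…,n} → {0,…,n}` with `α(k) ≤ k`.  (Matrix rows/columns are indexed by
`Fin n`, thought of as `{1,…,n}` via `i ↦ i+1`.) -/
theorem stmt_4 (n : ℕ) (I : Set (Matrix (Fin n) (Fin n) ℂ))
    (hI : IsIdealIn (UT n) I) :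
    ∃ α : Fin (n + 1) → Fin (n + 1), Monotone α ∧ (∀ k, α k ≤ k) ∧
      I = {x | x ∈ UT n ∧
        ∀ i j : Fin n, (α j.succ : ℕ) < (i : ℕ) + 1 → x i j = 0} := by
  classical
  set S : Fin n → Fin n → Prop := fun i j => ∃ x ∈ I, x i j ≠ 0 with hSdef
  have hSle : ∀ i j, S i j → i ≤ j := by
    rintro i j ⟨x, hx, hne⟩
    by_contra h
    exact hne (hI.1 hx i j (not_le.mp h))
  have hSmono : ∀ i j j', j ≤ j' → S i j → S i j' := by
    rintro i j j' hjj ⟨x, hx, hne⟩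
    refine ⟨x * Matrix.single j j' 1, (hI.2.2.2.2 _ (aux_std_mem_UT hjj 1) x hx).2, ?_⟩
    rw [Matrix.mul_single_apply_same]
    simpa using hne
  set m : Fin n → ℕ := fun j =>
    (Finset.univ.filter fun i => S i j).sup (fun i => (i : ℕ) + 1) with hmdef
  have hm_le : ∀ j : Fin n, m j ≤ (j : ℕ) + 1 := by
    intro j
    apply Finset.sup_le
    intro i hi
    have h2 : (i : ℕ) ≤ (j : ℕ) := hSle i j (Finset.mem_filter.mp hi).2
    omega
  have hm_mono : ∀ j j' : Fin n, j ≤ j' → m j ≤ m j' := by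
    intro j j' hjj
    apply Finset.sup_le
    intro i hi
    exact Finset.le_sup (f := fun i : Fin n => (i : ℕ) + 1) (Finset.mem_filter.mpr
      ⟨Finset.mem_univ i, hSmono i j j' hjj (Finset.mem_filter.mp hi).2⟩)
  have hmn : ∀ j : Fin n, m j < n + 1 := by
    intro j
    have := hm_le j
    have := j.2
    omega
  refine ⟨Fin.cases 0 (fun j => ⟨m j, hmn j⟩), ?_, ?_, ?_⟩
  · intro k k' hk
    induction k using Fin.cases with
    | zero => exact Fin.zero_le _
    | succ j =>
      induction k' using Fin.cases with
      | zero => exact absurd hk (by simp [Fin.le_def])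
      | succ j' =>
        have hjj : j ≤ j' := by
          rwa [Fin.succ_le_succ_iff] at hk
        simp only [Fin.cases_succ]
        exact hm_mono j j' hjj
  · intro k
    induction k using Fin.cases with
    | zero => exact le_refl _
    | succ j =>
      simp only [Fin.cases_succ]
      rw [Fin.le_def]
      simpa using hm_le j
  · ext x
    constructor
    · intro hx
      refine ⟨hI.1 hx, fun i j hlt => ?_⟩
      simp only [Fin.cases_succ] at hlt
      by_contra hne
      have : (i : ℕ) + 1 ≤ m j :=
        Finset.le_sup (f := fun i : Fin n => (i : ℕ) + 1)
          (Finset.mem_filter.mpr ⟨Finset.mem_univ i, ⟨x, hx, hne⟩⟩)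
      omega
    · rintro ⟨hxUT, hx0⟩
      simp only [Fin.cases_succ] at hx0
      have hsum : ∀ (s : Finset (Fin n)) (f : Fin n → Matrix (Fin n) (Fin n) ℂ),
          (∀ b ∈ s, f b ∈ I) → ∑ b ∈ s, f b ∈ I := by
        intro s f hf
        exact Finset.sum_induction f (· ∈ I) (fun a b ha hb => hI.2.2.1 a ha b hb) hI.2.1 hf
      rw [Matrix.matrix_eq_sum_single x]
      apply hsum
      intro i _
      apply hsum
      intro j _
      rcases eq_or_ne (x i j) 0 with h0 | h0
      · rw [h0, Matrix.single_zero]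
        exact hI.2.1
      · have hle : (i : ℕ) + 1 ≤ m j := by
          by_contra h
          exact h0 (hx0 i j (not_le.mp h))
        obtain ⟨i₀, hi₀mem, hi₀le⟩ :=
          (Finset.le_sup_iff (by omega : (0:ℕ) < (i:ℕ) + 1)).mp hle
        obtain ⟨x₀, hx₀I, hx₀ne⟩ := (Finset.mem_filter.mp hi₀mem).2
        have hii : i ≤ i₀ := by
          rw [Fin.le_def]; omega
        have hmem := aux_shift hI hx₀I hii (le_refl j)
        have := hI.2.2.2.1 (x i j * (x₀ i₀ j)⁻¹) _ hmem
        rw [smul_smul] at this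
        have hc : x i j * (x₀ i₀ j)⁻¹ * x₀ i₀ j = x i j := by
          field_simp
        rw [hc] at this
        convert this using 1
        rw [Matrix.smul_single]
        simp
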